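/- Suppose f(x,y) is μ-strongly convex in y and has L-Lipschitz gradient jointly in (x,y). Then Φ(x) := f(x, y*(x)) has Lipschitz gradient with constant L_Φ = L + L²/μ, i.e., ‖∇Φ(x₁) − ∇Φ(x₂)‖ ≤ (L + L²/μ)‖x₁ − x₂‖ for all x₁, x₂. -/

import Mathlib

open Real InnerProductSpace

variable {E : Type*} [NormedAddCommGroup E] [InnerProductSpace ℝ E] [CompleteSpace E]

/-- First-order condition for convexity. -/
lemma convex_first_order {h : E → ℝ} {h' : E →L[ℝ] ℝ} (hc : ConvexOn ℝ Set.univ h)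
    {z : E} (hd : HasFDerivAt h h' z) (y : E) : h z + h' (y - z) ≤ h y := by
  have hder : HasDerivAt (fun t : ℝ => h (z + t • (y - z))) (h' (y - z)) 0 := by
    have hline : HasDerivAt (fun t : ℝ => z + t • (y - z)) (y - z) 0 := by
      simpa using ((hasDerivAt_id (0:ℝ)).smul_const (y - z)).const_add z
    have hd0 : HasFDerivAt h h' ((0:ℝ) • (y - z) + z) := by simpa using hd
    have := (HasFDerivAt.comp_hasDerivAt (0:ℝ) (by simpa using hd) hline)
    simpa [Function.comp_def] using this
  have htend : Filter.Tendsto (slope (fun t : ℝ => h (z + t • (y - z))) 0)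
      (nhdsWithin 0 (Set.Ioi 0)) (nhds (h' (y - z))) :=
    (hasDerivAt_iff_tendsto_slope.mp hder).mono_left
      (nhdsWithin_mono _ (fun t ht => ne_of_gt ht))
  have hb : ∀ᶠ t in nhdsWithin (0:ℝ) (Set.Ioi 0),
      slope (fun t : ℝ => h (z + t • (y - z))) 0 t ≤ h y - h z := by
    filter_upwards [Ioc_mem_nhdsGT_of_mem (Set.mem_Ico.mpr ⟨le_refl (0:ℝ), one_pos⟩)]
      with t ht
    have h1 : h (z + t • (y - z)) ≤ (1 - t) * h z + t * h y := by
      have := hc.2 (Set.mem_univ y) (Set.mem_univ z) (le_of_lt ht.1)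
        (by linarith [ht.2] : (0:ℝ) ≤ 1 - t) (by ring)
      have he : t • y + (1 - t) • z = z + t • (y - z) := by
        simp [smul_sub, sub_smul]; abel
      rw [he] at this
      rw [smul_eq_mul, smul_eq_mul] at this
      linarith
    rw [slope_def_field]
    simp only [zero_smul, add_zero, sub_zero]
    rw [div_le_iff₀ ht.1]
    nlinarith [ht.1]
  have := le_of_tendsto htend hb
  linarith

/-- First-order strong convexity inequality. -/
lemma strong_convex_first_order {g : E → ℝ} {μ : ℝ}
    (hsc : StrongConvexOn Set.univ μ g) (hd : Differentiable ℝ g) (z y : E) :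
    g z + ⟪gradient g z, y - z⟫_ℝ + μ / 2 * ‖y - z‖ ^ 2 ≤ g y := by
  set h : E → ℝ := fun w => g w - μ / 2 * ‖w‖ ^ 2 with hh
  have hc : ConvexOn ℝ Set.univ h := strongConvexOn_iff_convex.mp hsc
  have hgz : HasGradientAt g (gradient g z) z := (hd z).hasGradientAt
  have hgz' : HasFDerivAt g (toDual ℝ E (gradient g z)) z := hgz
  have hn : HasFDerivAt (fun w : E => ⟪w, w⟫_ℝ)
      ((fderivInnerCLM ℝ (z, z)).comp ((ContinuousLinearMap.id ℝ E).prod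
        (ContinuousLinearMap.id ℝ E))) z :=
    (hasFDerivAt_id z).inner ℝ (hasFDerivAt_id z)
  have hns : HasFDerivAt (fun w : E => μ / 2 * ⟪w, w⟫_ℝ)
      ((μ / 2) • ((fderivInnerCLM ℝ (z, z)).comp ((ContinuousLinearMap.id ℝ E).prod
        (ContinuousLinearMap.id ℝ E)))) z := hn.const_smul (μ / 2)
  have hh' : HasFDerivAt h
      (toDual ℝ E (gradient g z) -
        (μ / 2) • ((fderivInnerCLM ℝ (z, z)).comp ((ContinuousLinearMap.id ℝ E).prod
          (ContinuousLinearMap.id ℝ E)))) z := by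
    have : h = fun w => g w - μ / 2 * ⟪w, w⟫_ℝ := by
      ext w; simp [hh, real_inner_self_eq_norm_sq]
    rw [this]
    exact hgz'.sub hns
  have key := convex_first_order hc hh' y
  have happ : (toDual ℝ E (gradient g z) -
      (μ / 2) • ((fderivInnerCLM ℝ (z, z)).comp ((ContinuousLinearMap.id ℝ E).prod
        (ContinuousLinearMap.id ℝ E)))) (y - z)
      = ⟪gradient g z, y - z⟫_ℝ - μ / 2 * (2 * ⟪z, y - z⟫_ℝ) := by
    simp [fderivInnerCLM_apply, toDual_apply_apply, real_inner_comm]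
    left; ring
  rw [happ] at key
  simp only [hh] at key
  have hexp : ‖y - z‖ ^ 2 = ‖y‖ ^ 2 - 2 * ⟪z, y - z⟫_ℝ - ‖z‖ ^ 2 := by
    have h1 : ⟪z, y - z⟫_ℝ = ⟪z, y⟫_ℝ - ⟪z, z⟫_ℝ := inner_sub_right z y z
    have h2 : ‖y - z‖ ^ 2 = ‖y‖ ^ 2 - 2 * ⟪y, z⟫_ℝ + ‖z‖ ^ 2 := norm_sub_sq_real y z
    rw [h2, h1, real_inner_self_eq_norm_sq, real_inner_comm]
    ring
  rw [hexp]
  linarith [key]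

lemma gradient_eq_zero_of_isMinOn {g : E → ℝ} {y : E}
    (hmin : IsMinOn g Set.univ y) : gradient g y = 0 := by
  have hloc : IsLocalMin g y := hmin.isLocalMin Filter.univ_mem
  have := hloc.fderiv_eq_zero
  rw [gradient, this]
  simp

/-- `Φ(x) = f(x, y*(x))` has `(L + L²/μ)`-Lipschitz gradient, where
`∇Φ(x) = ∇_x f(x, y*(x))` by the implicit function theorem. -/
theorem hypergradient_lipschitz {m n : ℕ}
    (f : EuclideanSpace ℝ (Fin m) → EuclideanSpace ℝ (Fin n) → ℝ)
    (μ L : ℝ) (hμ : 0 < μ) (hL : 0 < L)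
    (hdiff : ∀ x, Differentiable ℝ (f x))
    (hdiffx : ∀ y, Differentiable ℝ (fun x => f x y))
    (hsc : ∀ x, StrongConvexOn Set.univ μ (f x))
    (hlipy : ∀ x₁ x₂ y₁ y₂,
      ‖gradient (f x₁) y₁ - gradient (f x₂) y₂‖ ≤
        L * Real.sqrt (‖x₁ - x₂‖ ^ 2 + ‖y₁ - y₂‖ ^ 2))
    (hlipx : ∀ x₁ x₂ y₁ y₂,
      ‖gradient (fun x => f x y₁) x₁ - gradient (fun x => f x y₂) x₂‖ ≤
        L * Real.sqrt (‖x₁ - x₂‖ ^ 2 + ‖y₁ - y₂‖ ^ 2))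
    (ystar : EuclideanSpace ℝ (Fin m) → EuclideanSpace ℝ (Fin n))
    (hmin : ∀ x, IsMinOn (f x) Set.univ (ystar x)) :
    ∀ x₁ x₂,
      ‖gradient (fun x => f x (ystar x₁)) x₁ -
        gradient (fun x => f x (ystar x₂)) x₂‖ ≤
      (L + L ^ 2 / μ) * ‖x₁ - x₂‖ := by
  intro x₁ x₂
  set y₁ := ystar x₁
  set y₂ := ystar x₂
  set D := ‖x₁ - x₂‖ with hD
  have hD0 : 0 ≤ D := norm_nonneg _
  have hz1 : gradient (f x₁) y₁ = 0 := gradient_eq_zero_of_isMinOn (hmin x₁)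
  have hz2 : gradient (f x₂) y₂ = 0 := gradient_eq_zero_of_isMinOn (hmin x₂)
  -- bound on ‖gradient (f x₁) y₂‖
  have hgb : ‖gradient (f x₁) y₂‖ ≤ L * D := by
    have := hlipy x₁ x₂ y₂ y₂
    rw [hz2, sub_zero, sub_self, norm_zero] at this
    calc ‖gradient (f x₁) y₂‖ ≤ L * Real.sqrt (D ^ 2 + 0 ^ 2) := this
      _ = L * D := by
          rw [show D ^ 2 + 0 ^ 2 = D ^ 2 by ring, Real.sqrt_sq hD0]
  -- bound ‖y₁ - y₂‖ ≤ (L/μ) * D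
  have hyb : ‖y₁ - y₂‖ ≤ L / μ * D := by
    have key1 := strong_convex_first_order (hsc x₁) (hdiff x₁) y₁ y₂
    have key2 := strong_convex_first_order (hsc x₁) (hdiff x₁) y₂ y₁
    rw [hz1] at key1
    simp only [inner_zero_left] at key1
    have hsum : μ * ‖y₁ - y₂‖ ^ 2 ≤ ⟪gradient (f x₁) y₂, y₂ - y₁⟫_ℝ := by
      have h1 : ⟪gradient (f x₁) y₂, y₂ - y₁⟫_ℝ = -⟪gradient (f x₁) y₂, y₁ - y₂⟫_ℝ := by
        rw [← inner_neg_right]; congr 1; abel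
      have h2 : ‖y₂ - y₁‖ = ‖y₁ - y₂‖ := norm_sub_rev _ _
      rw [h2] at key1
      rw [h1]
      linarith
    have hcs : ⟪gradient (f x₁) y₂, y₂ - y₁⟫_ℝ ≤ L * D * ‖y₁ - y₂‖ := by
      calc ⟪gradient (f x₁) y₂, y₂ - y₁⟫_ℝ ≤ ‖gradient (f x₁) y₂‖ * ‖y₂ - y₁‖ :=
            real_inner_le_norm _ _
        _ = ‖gradient (f x₁) y₂‖ * ‖y₁ - y₂‖ := by rw [norm_sub_rev]
        _ ≤ L * D * ‖y₁ - y₂‖ := by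
            apply mul_le_mul_of_nonneg_right hgb (norm_nonneg _)
    rcases eq_or_lt_of_le (norm_nonneg (y₁ - y₂)) with h0 | h0
    · rw [← h0]; positivity
    · have : μ * ‖y₁ - y₂‖ ^ 2 ≤ L * D * ‖y₁ - y₂‖ := le_trans hsum hcs
      rw [div_mul_eq_mul_div, le_div_iff₀ hμ]
      nlinarith
  -- conclude
  calc ‖gradient (fun x => f x y₁) x₁ - gradient (fun x => f x y₂) x₂‖
      ≤ L * Real.sqrt (D ^ 2 + ‖y₁ - y₂‖ ^ 2) := hlipx x₁ x₂ y₁ y₂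
    _ ≤ L * (D + ‖y₁ - y₂‖) := by
        apply mul_le_mul_of_nonneg_left _ hL.le
        rw [show (D + ‖y₁ - y₂‖) = Real.sqrt ((D + ‖y₁ - y₂‖) ^ 2) by
          rw [Real.sqrt_sq (by positivity)]]
        apply Real.sqrt_le_sqrt
        nlinarith [norm_nonneg (y₁ - y₂), hD0]
    _ ≤ L * (D + L / μ * D) := by
        apply mul_le_mul_of_nonneg_left _ hL.le
        linarith
    _ = (L + L ^ 2 / μ) * D := by field_simp
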